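/- arXiv:1201.5046 — 2 statements merged into one kernel-verified Lean document; each statement's English description precedes it below -/
import Mathlib

section
/- The conditional probability that Y_i=1 given Z_{i-1}=m and the constraint C={Z_n=n_1} satisfies P(Y_i=1 | Z_{i-1}=m, C) = π_i·B_i(m+1) / B_{i-1}(m), provided P(Z_{i-1}=m, C) > 0. -/
open scoped Classical
open Finset

/-- Product Bernoulli weight of a configuration: individual `i+1` (1-based) has
probability `π (i+1)` of being a case (`true`). -/
noncomputable def wgt (n : ℕ) (π : ℕ → ℝ) (y : Fin n → Bool) : ℝ :=
  ∏ i : Fin n, if y i then π (i.1 + 1) else 1 - π (i.1 + 1)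

/-- Probability of an event under the product Bernoulli law. -/
noncomputable def prb (n : ℕ) (π : ℕ → ℝ) (E : (Fin n → Bool) → Prop) : ℝ :=
  ∑ y : Fin n → Bool, if E y then wgt n π y else 0

/-- Partial sum `Z_j = Y_1 + ... + Y_j`. -/
def zsum (n : ℕ) (y : Fin n → Bool) (j : ℕ) : ℤ :=
  ((Finset.univ.filter (fun i : Fin n => i.1 < j ∧ y i)).card : ℤ)

/-- Tail sum `Y_{i+1} + ... + Y_n`. -/
def tcnt (n : ℕ) (y : Fin n → Bool) (i : ℕ) : ℤ :=
  ((Finset.univ.filter (fun k : Fin n => i ≤ k.1 ∧ y k)).card : ℤ)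

/-- Forward quantity `F_i(m) = P(Z_i = m)`. -/
noncomputable def fwd (n : ℕ) (π : ℕ → ℝ) (i : ℕ) (m : ℤ) : ℝ :=
  prb n π (fun y => zsum n y i = m)

/-- Backward quantity `B_i(m) = P(Y_{i+1} + ... + Y_n = n1 - m)`. -/
noncomputable def bwd (n : ℕ) (π : ℕ → ℝ) (n1 : ℤ) (i : ℕ) (m : ℤ) : ℝ :=
  prb n π (fun y => tcnt n y i = n1 - m)


noncomputable def fterm (π : ℕ → ℝ) (n : ℕ) (k : Fin n) (b : Bool) : ℝ :=
  if b then π (k.1 + 1) else 1 - π (k.1 + 1)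

lemma wgt_eq (n : ℕ) (π : ℕ → ℝ) (y : Fin n → Bool) :
    wgt n π y = ∏ k, fterm π n k (y k) := rfl

lemma sum_univ_congr {α β : Type*} [AddCommMonoid β] (I1 I2 : Fintype α) (f : α → β) :
    @Finset.sum α β _ (@Finset.univ α I1) f = @Finset.sum α β _ (@Finset.univ α I2) f := by
  obtain rfl := Subsingleton.elim I1 I2
  rfl

lemma sum_prod_bool {ι : Type*} [Fintype ι] (g : ι → Bool → ℝ) :
    ∑ f : ι → Bool, ∏ i, g i (f i) = ∏ i, (g i true + g i false) := by
  classical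
  rw [← Fintype.prod_sum fun i b => g i b]
  exact Finset.prod_congr rfl fun i _ => by simp

lemma sum_prod_bool_one {ι : Type*} [Fintype ι] (g : ι → Bool → ℝ)
    (h : ∀ i, g i true + g i false = 1) :
    ∑ f : ι → Bool, ∏ i, g i (f i) = 1 := by
  rw [sum_prod_bool]; simp [h]

lemma prb_congr (n : ℕ) (π : ℕ → ℝ) (E F : (Fin n → Bool) → Prop)
    (h : ∀ y, E y ↔ F y) : prb n π E = prb n π F := by
  unfold prb; exact Finset.sum_congr rfl fun y _ => by rw [h y]

set_option maxHeartbeats 1000000 in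
lemma prb_split (n : ℕ) (π : ℕ → ℝ) (j : ℕ) (A B : (Fin n → Bool) → Prop)
    (hA : ∀ y y' : Fin n → Bool, (∀ k : Fin n, k.1 < j → y k = y' k) → (A y ↔ A y'))
    (hB : ∀ y y' : Fin n → Bool, (∀ k : Fin n, j ≤ k.1 → y k = y' k) → (B y ↔ B y')) :
    prb n π (fun y => A y ∧ B y) = prb n π A * prb n π B := by
  classical
  set P : Fin n → Prop := fun k => k.1 < j with hP
  set e := (Equiv.piEquivPiSubtypeProd P fun _ => Bool).symm with he
  set WH : ({x : Fin n // P x} → Bool) → ℝ :=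
    fun u => ∏ k : {x : Fin n // P x}, fterm π n k.1 (u k) with hWH
  set WT : ({x : Fin n // ¬ P x} → Bool) → ℝ :=
    fun v => ∏ k : {x : Fin n // ¬ P x}, fterm π n k.1 (v k) with hWT
  have key : ∀ E : (Fin n → Bool) → Prop, prb n π E =
      ∑ u : {x : Fin n // P x} → Bool, ∑ v : {x : Fin n // ¬ P x} → Bool,
        (if E (e (u, v)) then 1 else 0) * (WH u * WT v) := by
    intro E
    rw [prb, ← Equiv.sum_comp e (fun y => if E y then wgt n π y else 0),
      Fintype.sum_prod_type]
    refine Finset.sum_congr rfl fun u _ => Finset.sum_congr rfl fun v _ => ?_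
    have hw : wgt n π (e (u, v)) = WH u * WT v := by
      rw [wgt_eq, ← Fintype.prod_subtype_mul_prod_subtype P
        (fun k => fterm π n k (e (u, v) k))]
      congr 1
      · exact Finset.prod_congr rfl fun k _ => by
          simp [he, Equiv.piEquivPiSubtypeProd_symm_apply, k.2]
      · exact Finset.prod_congr rfl fun k _ => by
          simp [he, Equiv.piEquivPiSubtypeProd_symm_apply, k.2]
    rw [hw]; split <;> simp
  have hu : ∀ (u) (v v' : {x : Fin n // ¬ P x} → Bool),
      A (e (u, v)) ↔ A (e (u, v')) := by
    intro u v v'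
    refine hA _ _ fun k hk => ?_
    simp [he, Equiv.piEquivPiSubtypeProd_symm_apply, hP, hk]
  have hv : ∀ (u u' : {x : Fin n // P x} → Bool) (v),
      B (e (u, v)) ↔ B (e (u', v)) := by
    intro u u' v
    refine hB _ _ fun k hk => ?_
    have hk' : ¬ P k := by simp [hP]; omega
    simp [he, Equiv.piEquivPiSubtypeProd_symm_apply, hk']
  set u0 : {x : Fin n // P x} → Bool := fun _ => false with hu0
  set v0 : {x : Fin n // ¬ P x} → Bool := fun _ => false with hv0
  have hone1 : ∑ u, WH u = 1 := by
    rw [hWH]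
    have := sum_prod_bool_one (fun (k : {x : Fin n // P x}) b => fterm π n k.1 b)
      fun k => by simp [fterm]
    convert this using 2
    congr 1
    exact Subsingleton.elim _ _
  have hone2 : ∑ v, WT v = 1 := by
    rw [hWT]
    have := sum_prod_bool_one (fun (k : {x : Fin n // ¬ P x}) b => fterm π n k.1 b)
      fun k => by simp [fterm]
    convert this using 2
    congr 1
    exact Subsingleton.elim _ _
  have keyA : prb n π A = ∑ u, (if A (e (u, v0)) then 1 else 0) * WH u := by
    rw [key A]
    refine Finset.sum_congr rfl fun u _ => ?_
    have : ∀ v, (if A (e (u, v)) then (1:ℝ) else 0) * (WH u * WT v)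
        = ((if A (e (u, v0)) then 1 else 0) * WH u) * WT v := by
      intro v; rw [show A (e (u, v)) ↔ A (e (u, v0)) from hu u v v0]; ring
    rw [Finset.sum_congr rfl fun v _ => this v, ← Finset.mul_sum, hone2, mul_one]
  have keyB : prb n π B = ∑ v, (if B (e (u0, v)) then 1 else 0) * WT v := by
    rw [key B, Finset.sum_comm]
    refine Finset.sum_congr rfl fun v _ => ?_
    have : ∀ u, (if B (e (u, v)) then (1:ℝ) else 0) * (WH u * WT v)
        = ((if B (e (u0, v)) then 1 else 0) * WT v) * WH u := by
      intro u; rw [show B (e (u, v)) ↔ B (e (u0, v)) from hv u u0 v]; ring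
    rw [Finset.sum_congr rfl fun u _ => this u, ← Finset.mul_sum, hone1, mul_one]
  rw [key, keyA, keyB, Finset.sum_mul_sum]
  refine Finset.sum_congr rfl fun u _ => Finset.sum_congr rfl fun v _ => ?_
  rw [show (A (e (u, v)) ∧ B (e (u, v))) ↔ (A (e (u, v0)) ∧ B (e (u0, v))) from
    and_congr (hu u v v0) (hv u u0 v)]
  split_ifs with h h1 h2 <;> simp_all

lemma zsum_congr' (n j : ℕ) (y y' : Fin n → Bool)
    (h : ∀ k : Fin n, k.1 < j → y k = y' k) : zsum n y j = zsum n y' j := by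
  unfold zsum
  congr 1
  refine congrArg Finset.card (Finset.filter_congr fun k _ => ?_)
  by_cases hk : k.1 < j
  · simp [hk, h k hk]
  · simp [hk]

lemma tcnt_congr' (n j : ℕ) (y y' : Fin n → Bool)
    (h : ∀ k : Fin n, j ≤ k.1 → y k = y' k) : tcnt n y j = tcnt n y' j := by
  unfold tcnt
  congr 1
  refine congrArg Finset.card (Finset.filter_congr fun k _ => ?_)
  by_cases hk : j ≤ k.1
  · simp [hk, h k hk]
  · simp [hk]

lemma zsum_total (n : ℕ) (y : Fin n → Bool) (j : ℕ) :
    zsum n y n = zsum n y j + tcnt n y j := by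
  unfold zsum tcnt
  rw [← Nat.cast_add]
  congr 1
  rw [← Finset.card_union_of_disjoint]
  · congr 1
    ext k
    simp only [Finset.mem_filter, Finset.mem_union, Finset.mem_univ, true_and]
    constructor
    · rintro ⟨-, hk⟩
      by_cases h : k.1 < j
      · exact Or.inl ⟨h, hk⟩
      · exact Or.inr ⟨by omega, hk⟩
    · rintro (⟨-, hk⟩ | ⟨-, hk⟩) <;> exact ⟨k.2, hk⟩
  · rw [Finset.disjoint_left]
    rintro k hk hk'
    simp only [Finset.mem_filter] at hk hk'
    omega

lemma tcnt_succ (n : ℕ) (y : Fin n → Bool) (i : ℕ) (hi1 : 1 ≤ i) (hi2 : i ≤ n)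
    (hy : y ⟨i - 1, Nat.lt_of_lt_of_le (Nat.sub_lt hi1 Nat.one_pos) hi2⟩ = true) :
    tcnt n y (i - 1) = tcnt n y i + 1 := by
  unfold tcnt
  have hins : (Finset.univ.filter fun k : Fin n => i - 1 ≤ k.1 ∧ y k)
      = insert ⟨i - 1, by omega⟩ (Finset.univ.filter fun k : Fin n => i ≤ k.1 ∧ y k) := by
    ext k
    simp only [Finset.mem_filter, Finset.mem_insert, Finset.mem_univ, true_and]
    constructor
    · rintro ⟨h1, h2⟩
      by_cases h : i ≤ k.1
      · exact Or.inr ⟨h, h2⟩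
      · refine Or.inl (Fin.ext ?_)
        show k.1 = i - 1
        omega
    · rintro (rfl | ⟨h1, h2⟩)
      · exact ⟨le_refl _, hy⟩
      · exact ⟨by omega, h2⟩
  rw [hins, Finset.card_insert_of_notMem]
  · push_cast; ring
  · simp only [Finset.mem_filter, Finset.mem_univ, true_and]
    rintro ⟨h, -⟩
    omega

lemma prb_single (n : ℕ) (π : ℕ → ℝ) (k0 : Fin n) :
    prb n π (fun y => y k0 = true) = π (k0.1 + 1) := by
  classical
  set g : Fin n → Bool → ℝ := fun k b =>
    if k = k0 then (if b then π (k0.1 + 1) else 0) else fterm π n k b with hg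
  have hpt : ∀ y : Fin n → Bool,
      (@ite ℝ (y k0 = true) (Classical.propDecidable _) (wgt n π y) 0) = ∏ k, g k (y k) := by
    intro y
    by_cases hy : y k0 = true
    · rw [if_pos hy, wgt_eq]
      refine Finset.prod_congr rfl fun k _ => ?_
      by_cases hk : k = k0
      · subst hk; simp [hg, hy, fterm]
      · simp [hg, hk]
    · rw [if_neg hy]
      symm
      refine Finset.prod_eq_zero (Finset.mem_univ k0) ?_
      simp only [Bool.not_eq_true] at hy
      simp [hg, hy]
  rw [prb]
  refine Eq.trans (Finset.sum_congr rfl fun y _ => hpt y) ?_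
  refine Eq.trans (sum_univ_congr _ _ _) (Eq.trans (sum_prod_bool g) ?_)
  rw [Fintype.prod_eq_single k0 (fun k hk => by simp [hg, hk, fterm])]
  simp [hg]


/-- Backward sampling probability: the conditional probability that individual
`i` is a case given the number of cases among the first `i-1` and the total
constraint. -/
theorem sampling_probability (n : ℕ) (π : ℕ → ℝ) (n1 : ℤ)
    (hπ : ∀ i, 0 ≤ π i ∧ π i ≤ 1)
    (i : ℕ) (hi1 : 1 ≤ i) (hi2 : i ≤ n) (m : ℤ)
    (hpos : 0 < prb n π (fun y => zsum n y (i - 1) = m ∧ zsum n y n = n1)) :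
    prb n π (fun y => y ⟨i - 1, by omega⟩ = true ∧ zsum n y (i - 1) = m ∧ zsum n y n = n1) /
      prb n π (fun y => zsum n y (i - 1) = m ∧ zsum n y n = n1)
      = π i * bwd n π n1 i (m + 1) / bwd n π n1 (i - 1) m := by

  have hin : i - 1 < n := by omega
  show prb n π (fun y => y (⟨i - 1, hin⟩ : Fin n) = true ∧
        zsum n y (i - 1) = m ∧ zsum n y n = n1) /
      prb n π (fun y => zsum n y (i - 1) = m ∧ zsum n y n = n1)
      = π i * bwd n π n1 i (m + 1) / bwd n π n1 (i - 1) m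
  have hiffD : ∀ y : Fin n → Bool,
      (zsum n y (i - 1) = m ∧ zsum n y n = n1) ↔
      (zsum n y (i - 1) = m ∧ tcnt n y (i - 1) = n1 - m) := by
    intro y
    have := zsum_total n y (i - 1)
    constructor
    · rintro ⟨h1, h2⟩; exact ⟨h1, by omega⟩
    · rintro ⟨h1, h2⟩; exact ⟨h1, by omega⟩
  have hiffN : ∀ y : Fin n → Bool,
      (y (⟨i - 1, hin⟩ : Fin n) = true ∧ zsum n y (i - 1) = m ∧ zsum n y n = n1) ↔
      (zsum n y (i - 1) = m ∧
        (y (⟨i - 1, hin⟩ : Fin n) = true ∧ tcnt n y i = n1 - (m + 1))) := by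
    intro y
    have ht := zsum_total n y (i - 1)
    constructor
    · rintro ⟨hy, h1, h2⟩
      have := tcnt_succ n y i hi1 hi2 hy
      exact ⟨h1, hy, by omega⟩
    · rintro ⟨h1, hy, h2⟩
      have := tcnt_succ n y i hi1 hi2 hy
      exact ⟨hy, h1, by omega⟩
  have hDcongrA : ∀ y y' : Fin n → Bool, (∀ k : Fin n, k.1 < i - 1 → y k = y' k) →
      ((zsum n y (i - 1) = m) ↔ (zsum n y' (i - 1) = m)) :=
    fun y y' h => by rw [zsum_congr' n (i - 1) y y' h]
  have hD : prb n π (fun y => zsum n y (i - 1) = m ∧ zsum n y n = n1)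
      = prb n π (fun y => zsum n y (i - 1) = m) * bwd n π n1 (i - 1) m := by
    rw [prb_congr n π _ _ hiffD]
    exact prb_split n π (i - 1) _ _ hDcongrA
      (fun y y' h => by rw [tcnt_congr' n (i - 1) y y' h])
  have hB' : prb n π (fun y => y (⟨i - 1, hin⟩ : Fin n) = true ∧
        tcnt n y i = n1 - (m + 1))
      = π i * bwd n π n1 i (m + 1) := by
    rw [prb_split n π i (fun y => y (⟨i - 1, hin⟩ : Fin n) = true)
      (fun y => tcnt n y i = n1 - (m + 1))
      (fun y y' h => by
        show y ⟨i - 1, hin⟩ = true ↔ y' ⟨i - 1, hin⟩ = true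
        rw [h ⟨i - 1, hin⟩ (by show i - 1 < i; omega)])
      (fun y y' h => by
        show tcnt n y i = n1 - (m + 1) ↔ tcnt n y' i = n1 - (m + 1)
        rw [tcnt_congr' n i y y' h])]
    rw [prb_single n π ⟨i - 1, hin⟩]
    have hii : i - 1 + 1 = i := by omega
    show π (i - 1 + 1) * _ = _
    rw [hii]
    rfl
  have hN : prb n π (fun y => y (⟨i - 1, hin⟩ : Fin n) = true ∧
        zsum n y (i - 1) = m ∧ zsum n y n = n1)
      = prb n π (fun y => zsum n y (i - 1) = m) * (π i * bwd n π n1 i (m + 1)) := by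
    rw [prb_congr n π _ _ hiffN]
    rw [prb_split n π (i - 1) (fun y => zsum n y (i - 1) = m)
      (fun y => y (⟨i - 1, hin⟩ : Fin n) = true ∧ tcnt n y i = n1 - (m + 1))
      hDcongrA
      (fun y y' h => by
        show (y ⟨i - 1, hin⟩ = true ∧ tcnt n y i = n1 - (m + 1)) ↔
          (y' ⟨i - 1, hin⟩ = true ∧ tcnt n y' i = n1 - (m + 1))
        rw [h ⟨i - 1, hin⟩ (by show i - 1 ≤ i - 1; omega),
          tcnt_congr' n i y y' fun k hk => h k (by omega)])]
    rw [hB']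
  have hfa : prb n π (fun y => zsum n y (i - 1) = m) ≠ 0 := by
    intro h
    rw [hD, h, zero_mul] at hpos
    exact lt_irrefl 0 hpos
  rw [hN, hD]
  exact mul_div_mul_left _ _ hfa
end

section
/- The backward sampling algorithm is correct: if phenotypes Y_1,...,Y_n are sampled sequentially with P(Y_i=1 | Y_1,...,Y_{i-1}) = π_i·B_i(Z_{i-1}+1)/B_{i-1}(Z_{i-1}) (where Z_{i-1}=Y_1+...+Y_{i-1}), then the resulting joint distribution of (Y_1,...,Y_n) equals the law of n independent Bernoulli(π_i) variables conditioned on the event {Y_1+...+Y_n = n_1}. In particular every sampled configuration has exactly n_1 ones. -/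
open scoped Classical
open Finset

lemma zsum_zero (n : ℕ) (y : Fin n → Bool) : zsum n y 0 = 0 := by
  simp [zsum]

lemma zsum_succ (n : ℕ) (y : Fin n → Bool) (j : ℕ) (hj : j < n) :
    zsum n y (j+1) = zsum n y j + (if y ⟨j, hj⟩ then 1 else 0) := by
  classical
  unfold zsum
  have h : (Finset.univ.filter (fun i : Fin n => i.1 < j + 1 ∧ y i)) =
      (Finset.univ.filter (fun i : Fin n => i.1 < j ∧ y i)) ∪
      (Finset.univ.filter (fun i : Fin n => i.1 = j ∧ y i)) := by
    ext i
    simp only [mem_filter, mem_union, mem_univ, true_and, Nat.lt_succ_iff_lt_or_eq]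
    tauto
  have hdisj : Disjoint (Finset.univ.filter (fun i : Fin n => i.1 < j ∧ y i))
      (Finset.univ.filter (fun i : Fin n => i.1 = j ∧ y i)) := by
    rw [Finset.disjoint_filter]
    rintro i _ ⟨h1, _⟩ ⟨h2, _⟩
    omega
  rw [h, Finset.card_union_of_disjoint hdisj]
  have h2 : (Finset.univ.filter (fun i : Fin n => i.1 = j ∧ y i)) =
      if y ⟨j, hj⟩ then {⟨j, hj⟩} else ∅ := by
    by_cases hy : y ⟨j, hj⟩
    · rw [if_pos hy]
      ext i
      simp only [mem_filter, mem_univ, true_and, mem_singleton]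
      constructor
      · rintro ⟨h1, h2⟩; exact Fin.ext h1
      · rintro rfl; exact ⟨rfl, hy⟩
    · rw [if_neg hy]
      ext i
      simp only [mem_filter, mem_univ, true_and, Finset.notMem_empty, iff_false]
      rintro ⟨h1, h2⟩
      have hi : i = ⟨j, hj⟩ := Fin.ext h1
      rw [hi] at h2
      exact hy h2
  rw [h2]
  by_cases hy : y ⟨j, hj⟩ <;> simp [hy]

lemma zsum_split (n : ℕ) (y : Fin n → Bool) (i : ℕ) :
    zsum n y i + tcnt n y i = zsum n y n := by
  classical
  unfold zsum tcnt
  rw [← Nat.cast_add, Nat.cast_inj, ← Finset.card_union_of_disjoint]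
  · congr 1
    ext k
    simp only [mem_union, mem_filter, mem_univ, true_and]
    constructor
    · rintro (⟨_, h⟩ | ⟨_, h⟩) <;> exact ⟨k.2, h⟩
    · rintro ⟨_, h⟩
      rcases lt_or_ge k.1 i with h1 | h1
      · exact Or.inl ⟨h1, h⟩
      · exact Or.inr ⟨h1, h⟩
  · rw [Finset.disjoint_filter]
    rintro k _ ⟨h1, _⟩ ⟨h2, _⟩
    omega

lemma tcnt_n (n : ℕ) (y : Fin n → Bool) : tcnt n y n = 0 := by
  unfold tcnt
  rw [Nat.cast_eq_zero]
  rw [Finset.card_eq_zero]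
  ext k
  simp only [mem_filter, mem_univ, true_and, Finset.notMem_empty, iff_false]
  rintro ⟨h, _⟩
  exact absurd k.2 (not_lt.mpr h)

lemma wgt_pos (n : ℕ) (π : ℕ → ℝ) (hπ : ∀ i, 1 ≤ i → i ≤ n → 0 < π i ∧ π i < 1)
    (y : Fin n → Bool) : 0 < wgt n π y := by
  apply Finset.prod_pos
  intro i _
  rcases hπ (i.1 + 1) (Nat.le_add_left 1 i.1) (Nat.succ_le_of_lt i.2) with ⟨h1, h2⟩
  by_cases hy : y i <;> simp [hy] <;> linarith

lemma bwd_last (n : ℕ) (π : ℕ → ℝ) (hπ : ∀ i, 1 ≤ i → i ≤ n → 0 < π i ∧ π i < 1)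
    (n1 m : ℤ) : bwd n π n1 n m = if m = n1 then 1 else 0 := by
  classical
  unfold bwd prb
  by_cases h : m = n1
  · subst h
    simp only [tcnt_n, sub_self, if_true]
    unfold wgt
    rw [← Fintype.prod_sum (fun (i : Fin n) (b : Bool) => if b then π (i.1+1) else 1 - π (i.1+1))]
    simp
  · rw [Finset.sum_eq_zero, if_neg h]
    intro y _
    rw [if_neg]
    show ¬(tcnt n y n = n1 - m)
    rw [tcnt_n]
    omega

lemma bwd_zero (n : ℕ) (π : ℕ → ℝ) (n1 : ℤ) :
    bwd n π n1 0 0 = prb n π (fun y => zsum n y n = n1) := by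
  unfold bwd prb
  apply Finset.sum_congr rfl
  intro y _
  have := zsum_split n y 0
  rw [zsum_zero] at this
  congr 1
  simp only [eq_iff_iff]
  omega

lemma bwd_pos_of (n : ℕ) (π : ℕ → ℝ) (hπ : ∀ i, 1 ≤ i → i ≤ n → 0 < π i ∧ π i < 1)
    (n1 : ℤ) (y : Fin n → Bool) (hy : zsum n y n = n1) (i : ℕ) :
    0 < bwd n π n1 i (zsum n y i) := by
  classical
  unfold bwd prb
  apply Finset.sum_pos'
  · intro y' _
    split
    · exact le_of_lt (wgt_pos n π hπ y')
    · exact le_refl 0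
  · refine ⟨y, Finset.mem_univ y, ?_⟩
    rw [if_pos (show tcnt n y i = n1 - zsum n y i by have := zsum_split n y i; omega)]
    exact wgt_pos n π hπ y

lemma prod_ratio (g : ℕ → ℝ) (c : ℕ → ℝ) (n : ℕ) (h0 : g 0 ≠ 0) (h : ∀ i < n, g i ≠ 0) :
    ∏ i ∈ Finset.range n, c i * (g (i+1) / g i)
      = (∏ i ∈ Finset.range n, c i) * (g n / g 0) := by
  induction n with
  | zero => simp [div_self h0]
  | succ n ih =>
    rw [Finset.prod_range_succ, Finset.prod_range_succ,
      ih (fun i hi => h i (Nat.lt_succ_of_lt hi))]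
    have hgn : g n ≠ 0 := h n (Nat.lt_succ_self n)
    rw [mul_mul_mul_comm]
    congr 1
    rw [div_mul_div_comm, mul_comm (g n), mul_div_mul_right _ _ hgn]

/-- The law of the heterogeneous Markov chain generated by backward sampling:
product over individuals of the transition probabilities
`π_i·B_i(Z_{i-1}+1)/B_{i-1}(Z_{i-1})` (case) and
`(1-π_i)·B_i(Z_{i-1})/B_{i-1}(Z_{i-1})` (control). -/
noncomputable def sampLaw (n : ℕ) (π : ℕ → ℝ) (n1 : ℤ) (y : Fin n → Bool) : ℝ :=
  ∏ i : Fin n,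
    if y i then
      π (i.1 + 1) * bwd n π n1 (i.1 + 1) (zsum n y i.1 + 1) / bwd n π n1 i.1 (zsum n y i.1)
    else
      (1 - π (i.1 + 1)) * bwd n π n1 (i.1 + 1) (zsum n y i.1) / bwd n π n1 i.1 (zsum n y i.1)

lemma sampLaw_eq (n : ℕ) (π : ℕ → ℝ) (n1 : ℤ) (y : Fin n → Bool)
    (h0 : bwd n π n1 0 0 ≠ 0)
    (hg : ∀ i < n, bwd n π n1 i (zsum n y i) ≠ 0) :
    sampLaw n π n1 y =
      wgt n π y * (bwd n π n1 n (zsum n y n) / bwd n π n1 0 0) := by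
  classical
  set g : ℕ → ℝ := fun j => bwd n π n1 j (zsum n y j) with hgdef
  set c : ℕ → ℝ := fun j =>
    if h : j < n then (if y ⟨j, h⟩ then π (j+1) else 1 - π (j+1)) else 1 with hcdef
  have hcfin : ∀ i : Fin n, c i.1 = if y i then π (i.1+1) else 1 - π (i.1+1) := by
    intro i
    simp only [hcdef, dif_pos i.2, Fin.eta]
  have key : sampLaw n π n1 y = ∏ j ∈ Finset.range n, c j * (g (j+1) / g j) := by
    unfold sampLaw
    rw [← Fin.prod_univ_eq_prod_range (fun j => c j * (g (j+1)/g j)) n]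
    apply Finset.prod_congr rfl
    intro i _
    have hi : i.1 < n := i.2
    rw [hcfin i]
    simp only [hgdef]
    rw [zsum_succ n y i.1 hi, Fin.eta]
    by_cases hy : y i <;> simp [hy, mul_div_assoc]
  have key2 : wgt n π y = ∏ j ∈ Finset.range n, c j := by
    unfold wgt
    rw [← Fin.prod_univ_eq_prod_range c n]
    exact Finset.prod_congr rfl (fun i _ => (hcfin i).symm)
  have hg0 : g 0 ≠ 0 := by
    simp only [hgdef, zsum_zero]
    exact h0
  rw [key, prod_ratio g c n hg0 (fun i hi => hg i hi), ← key2]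
  simp only [hgdef, zsum_zero]

/-- Correctness of backward sampling: the sampled law is the conditional law of
independent Bernoullis given the constraint, and every sampled configuration
has exactly `n1` cases. -/
theorem backward_sampling_correct (n : ℕ) (π : ℕ → ℝ) (n1 : ℤ)
    (hπ : ∀ i, 1 ≤ i → i ≤ n → 0 < π i ∧ π i < 1)
    (hn1 : 0 ≤ n1 ∧ n1 ≤ (n : ℤ)) (hB : 0 < bwd n π n1 0 0) :
    (∀ y : Fin n → Bool,
      sampLaw n π n1 y =
        if zsum n y n = n1 then wgt n π y / prb n π (fun y' => zsum n y' n = n1) else 0) ∧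
    (∀ y : Fin n → Bool, sampLaw n π n1 y ≠ 0 → zsum n y n = n1) := by
  classical
  have hBne : bwd n π n1 0 0 ≠ 0 := ne_of_gt hB
  have main : ∀ y : Fin n → Bool, sampLaw n π n1 y =
      if zsum n y n = n1 then wgt n π y / prb n π (fun y' => zsum n y' n = n1) else 0 := by
    intro y
    by_cases hy : zsum n y n = n1
    · rw [if_pos hy]
      have hg : ∀ i, i < n → bwd n π n1 i (zsum n y i) ≠ 0 :=
        fun i _ => ne_of_gt (bwd_pos_of n π hπ n1 y hy i)
      rw [sampLaw_eq n π n1 y hBne hg, bwd_last n π hπ n1 (zsum n y n), if_pos hy,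
        ← bwd_zero, mul_one_div]
    · rw [if_neg hy]
      by_cases hg : ∀ i, i < n → bwd n π n1 i (zsum n y i) ≠ 0
      · rw [sampLaw_eq n π n1 y hBne hg, bwd_last n π hπ n1 (zsum n y n), if_neg hy]
        simp
      · push_neg at hg
        obtain ⟨i, hi, hzero⟩ := hg
        unfold sampLaw
        apply Finset.prod_eq_zero (Finset.mem_univ (⟨i, hi⟩ : Fin n))
        by_cases hyi : y ⟨i, hi⟩ <;> simp [hyi, hzero]
  refine ⟨main, fun y hne => ?_⟩
  by_contra hy
  rw [main y, if_neg hy] at hne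
  exact hne rfl
end
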